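/- Let A be a finite dimensional algebra over an algebraically closed field and T a cotilting A-module. For every short exact sequence 0 → X →^f Y →^g Z → 0 of A-modules with X, Y, Z ∈ ⊥T and every A-module N, the induced sequence Hom̄_A^T(Z,N) → Hom̄_A^T(Y,N) → Hom̄_A^T(X,N) (given by composition with g and with f) is exact, where Hom̄_A^T(−,−) denotes Hom_A(−,−) modulo the subspace of morphisms factoring through add T. -/

import Mathlib

noncomputable section

open CategoryTheory Function

namespace Cotilt

variable (A : Type) [Ring A]

/-- `X ∈ add T`: `X` is a direct summand of a finite direct sum of copies of `T`. -/
def InAdd (T X : ModuleCat.{0} A) : Prop :=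
  ∃ (n : ℕ) (Y : ModuleCat.{0} A), Nonempty ((↥X × ↥Y) ≃ₗ[A] (Fin n → ↥T))

/-- A morphism factors through a module in `add T`. -/
def FactorsThruAdd (T : ModuleCat.{0} A) {X Y : ModuleCat.{0} A}
    (f : ↥X →ₗ[A] ↥Y) : Prop :=
  ∃ (T' : ModuleCat.{0} A), InAdd A T T' ∧
    ∃ (g : ↥X →ₗ[A] ↥T') (h : ↥T' →ₗ[A] ↥Y), f = h.comp g

/-- `Ext¹_A(X, Y) = 0`: every short exact sequence `0 → Y → E → X → 0` splits. -/
def Ext1Zero (X Y : ModuleCat.{0} A) : Prop :=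
  ∀ (E : ModuleCat.{0} A) (f : ↥Y →ₗ[A] ↥E) (g : ↥E →ₗ[A] ↥X),
    Injective f → Surjective g → LinearMap.range f = LinearMap.ker g →
    ∃ s : ↥X →ₗ[A] ↥E, g.comp s = LinearMap.id

/-- `Z` is a (first) syzygy of `X`: there is a short exact sequence `0 → Z → P → X → 0`
with `P` projective. -/
def IsSyzygyOf (Z X : ModuleCat.{0} A) : Prop :=
  ∃ (P : ModuleCat.{0} A) (p : ↥P →ₗ[A] ↥X) (i : ↥Z →ₗ[A] ↥P),
    Module.Projective A ↥P ∧ Surjective p ∧ Injective i ∧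
    LinearMap.range i = LinearMap.ker p

/-- `Z` is an `n`-th syzygy of `X`. -/
def NthSyzygy : ℕ → ModuleCat.{0} A → ModuleCat.{0} A → Prop
  | 0, Z, X => Nonempty (↥Z ≃ₗ[A] ↥X)
  | n+1, Z, X => ∃ W : ModuleCat.{0} A, IsSyzygyOf A W X ∧ NthSyzygy n Z W

/-- `X ∈ ⊥T`, i.e. `Ext^i_A(X, T) = 0` for all `i > 0`.  By dimension shifting,
`Ext^{n+1}_A(X, T) ≅ Ext¹_A(Ω^n X, T)` for every `n`-th syzygy `Ω^n X` of `X`, so this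
is expressed by the vanishing of `Ext¹(Z, T)` for every iterated syzygy `Z` of `X`
(the case `n = 0`, `Z = X`, giving `Ext¹(X, T) = 0` itself). -/
def MemPerp (T X : ModuleCat.{0} A) : Prop :=
  ∀ (n : ℕ) (Z : ModuleCat.{0} A), NthSyzygy A n Z X → Ext1Zero A Z T

/-- Projective dimension at most `n`. -/
def ProjDimLE : ℕ → ModuleCat.{0} A → Prop
  | 0, X => Module.Projective A ↥X
  | n+1, X => ∃ (P : ModuleCat.{0} A) (f : ↥P →ₗ[A] ↥X),
      Module.Projective A ↥P ∧ Surjective f ∧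
      ProjDimLE n (ModuleCat.of A ↥(LinearMap.ker f))

/-- Injective dimension at most `n`. -/
def InjDimLE : ℕ → ModuleCat.{0} A → Prop
  | 0, X => Module.Injective A ↥X
  | n+1, X => ∃ (I : ModuleCat.{0} A) (f : ↥X →ₗ[A] ↥I),
      Module.Injective A ↥I ∧ Injective f ∧
      InjDimLE n (ModuleCat.of A (↥I ⧸ LinearMap.range f))

/-- The ring `A` has global dimension at most `n`. -/
def GlobalDimLE (n : ℕ) : Prop := ∀ X : ModuleCat.{0} A, ProjDimLE A n X

variable (k : Type) [Field k] [Algebra k A]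

/-- The `k`-linear dual `D(A) = Hom_k(A, k)` of `A`, as a left `A`-module via
`(a • φ) x = φ (x a)`. -/
def CoDual : Type := A →ₗ[k] k

instance : AddCommGroup (CoDual A k) := inferInstanceAs (AddCommGroup (A →ₗ[k] k))

instance : Module A (CoDual A k) where
  smul a φ := (φ : A →ₗ[k] k).comp (LinearMap.mulRight k a)
  one_smul φ := by
    show (φ : A →ₗ[k] k).comp (LinearMap.mulRight k (1 : A)) = φ
    ext x; show DFunLike.coe (F := A →ₗ[k] k) φ (x * 1) = DFunLike.coe (F := A →ₗ[k] k) φ x; rw [mul_one]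
  mul_smul a b φ := by
    show (φ : A →ₗ[k] k).comp (LinearMap.mulRight k (a * b)) =
      ((φ : A →ₗ[k] k).comp (LinearMap.mulRight k b)).comp (LinearMap.mulRight k a)
    ext x; show DFunLike.coe (F := A →ₗ[k] k) φ (x * (a * b)) = DFunLike.coe (F := A →ₗ[k] k) φ (x * a * b); rw [mul_assoc]
  smul_zero a := by
    show (0 : A →ₗ[k] k).comp (LinearMap.mulRight k a) = 0
    ext x; simp
  smul_add a φ ψ := by
    show ((φ + ψ : A →ₗ[k] k)).comp (LinearMap.mulRight k a) =
      (φ : A →ₗ[k] k).comp (LinearMap.mulRight k a) +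
        (ψ : A →ₗ[k] k).comp (LinearMap.mulRight k a)
    ext x; rfl
  add_smul a b φ := by
    show (φ : A →ₗ[k] k).comp (LinearMap.mulRight k (a + b)) =
      (φ : A →ₗ[k] k).comp (LinearMap.mulRight k a) +
        (φ : A →ₗ[k] k).comp (LinearMap.mulRight k b)
    ext x
    show DFunLike.coe (F := A →ₗ[k] k) φ (x * (a + b)) = DFunLike.coe (F := A →ₗ[k] k) φ (x * a) + DFunLike.coe (F := A →ₗ[k] k) φ (x * b)
    rw [mul_add]; exact map_add (F := A →ₗ[k] k) φ _ _
  zero_smul φ := by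
    show (φ : A →ₗ[k] k).comp (LinearMap.mulRight k (0 : A)) = 0
    ext x; show DFunLike.coe (F := A →ₗ[k] k) φ (x * 0) = 0; rw [mul_zero]; exact map_zero (F := A →ₗ[k] k) φ

/-- `X` admits a resolution `0 → T_r → ⋯ → T_0 → X → 0` by modules in `add T`
of length at most `r`. -/
def AddTCoresLE (T : ModuleCat.{0} A) : ℕ → ModuleCat.{0} A → Prop
  | 0, X => InAdd A T X
  | r+1, X => ∃ (T0 : ModuleCat.{0} A) (g : ↥T0 →ₗ[A] ↥X),
      InAdd A T T0 ∧ Surjective g ∧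
      AddTCoresLE T r (ModuleCat.of A ↥(LinearMap.ker g))

/-- `T` is a cotilting `A`-module: `T` is finitely generated, has finite injective
dimension, satisfies `Ext^i_A(T, T) = 0` for all `i > 0`, and there is an exact
sequence `0 → T_r → ⋯ → T_1 → T_0 → D(A) → 0` with all `T_i ∈ add T`, where
`D = Hom_k(−, k)`. -/
def IsCotilting (T : ModuleCat.{0} A) : Prop :=
  Module.Finite A ↥T ∧ (∃ d : ℕ, InjDimLE A d T) ∧ MemPerp A T T ∧
    ∃ r : ℕ, AddTCoresLE A T r (ModuleCat.of A (CoDual A k))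

end Cotilt


namespace Cotilt

variable {A : Type} [Ring A]

lemma ext1Zero_of_equiv {Z M M' : ModuleCat.{0} A} (e : ↥M ≃ₗ[A] ↥M')
    (h : Ext1Zero A Z M) : Ext1Zero A Z M' := by
  intro E f g hfinj hgsurj hr
  refine h E (f.comp (e : ↥M →ₗ[A] ↥M')) g (hfinj.comp e.injective) hgsurj ?_
  rw [LinearMap.range_comp, LinearEquiv.range, Submodule.map_top, hr]

lemma ext1Zero_prod {Z M M' : ModuleCat.{0} A} (h : Ext1Zero A Z M)
    (h' : Ext1Zero A Z M') : Ext1Zero A Z (ModuleCat.of A (↥M × ↥M')) := by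
  intro E f g hfinj hgsurj hr
  set f₂ : ↥M' →ₗ[A] ↥E := f.comp (LinearMap.inr A ↥M ↥M') with hf₂
  set K : Submodule A ↥E := LinearMap.range f₂ with hK
  have hKg : K ≤ LinearMap.ker g := by
    rintro x ⟨m', rfl⟩
    have : f (0, m') ∈ LinearMap.ker g := hr ▸ LinearMap.mem_range_self f _
    simpa [hf₂] using this
  set π : ↥E →ₗ[A] ↥E ⧸ K := K.mkQ with hπ
  set gbar : ↥E ⧸ K →ₗ[A] ↥Z := K.liftQ g hKg with hgbar
  set f₁ : ↥M →ₗ[A] ↥E ⧸ K := π.comp (f.comp (LinearMap.inl A ↥M ↥M')) with hf₁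
  have hπf₂ : ∀ m' : ↥M', π (f (0, m')) = 0 := by
    intro m'
    rw [hπ, Submodule.mkQ_apply, Submodule.Quotient.mk_eq_zero]
    exact ⟨m', rfl⟩
  have hf₁inj : Injective f₁ := by
    intro a b hab
    have hmem : f (a, 0) - f (b, 0) ∈ K := by
      rw [← Submodule.Quotient.eq]; exact hab
    obtain ⟨m', hm'⟩ := hmem
    have : f ((0 : ↥M), m') = f (a - b, 0) := by
      have h0 : f ((0 : ↥M), m') = f₂ m' := rfl
      rw [h0, hm', ← map_sub]; congr 1
      rw [Prod.mk_sub_mk]; simp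
    have h2 := (Prod.ext_iff.1 (hfinj this)).1
    have : a - b = 0 := h2.symm
    exact sub_eq_zero.mp this
  have hgbarsurj : Surjective gbar := by
    intro z; obtain ⟨y, hy⟩ := hgsurj z
    exact ⟨π y, by simpa [hgbar, hπ] using hy⟩
  have hr₁ : LinearMap.range f₁ = LinearMap.ker gbar := by
    apply le_antisymm
    · rintro x ⟨m, rfl⟩
      have hker : f (m, 0) ∈ LinearMap.ker g := hr ▸ LinearMap.mem_range_self f _
      rw [LinearMap.mem_ker]
      show gbar (π (f (LinearMap.inl A ↥M ↥M' m))) = 0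
      simpa [hgbar, hπ] using hker
    · intro x hx
      obtain ⟨y, rfl⟩ := Submodule.mkQ_surjective K x
      have hy : g y = 0 := by simpa [hgbar] using hx
      obtain ⟨⟨m, m'⟩, hm⟩ : y ∈ LinearMap.range f := hr ▸ hy
      refine ⟨m, ?_⟩
      have : f (m, 0) - y = - f (0, m') := by
        rw [← hm, ← map_neg, ← map_sub]; congr 1
        rw [Prod.mk_sub_mk, Prod.neg_mk]; simp
      have hmem : f (m, 0) - y ∈ K := by
        rw [this]; exact Submodule.neg_mem _ ⟨m', rfl⟩
      simpa [hf₁, hπ, Submodule.Quotient.eq] using hmem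
  obtain ⟨s₁', hs₁⟩ := h (ModuleCat.of A (↥E ⧸ K)) f₁ gbar hf₁inj hgbarsurj hr₁
  set s₁ : ↥Z →ₗ[A] ↥E ⧸ K := s₁' with hs₁d
  -- pullback E₂ = {(z, e) | s₁ z = π e}
  set q : ↥Z × ↥E →ₗ[A] ↥E ⧸ K :=
    π.comp (LinearMap.snd A ↥Z ↥E) - s₁.comp (LinearMap.fst A ↥Z ↥E) with hq
  set E₂ : Submodule A (↥Z × ↥E) := LinearMap.ker q with hE₂
  have memE₂ : ∀ p : ↥Z × ↥E, p ∈ E₂ ↔ π p.2 = s₁ p.1 := by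
    intro p; simp [hE₂, hq, sub_eq_zero]
  set g₂ : ↥E₂ →ₗ[A] ↥Z := (LinearMap.fst A ↥Z ↥E).comp E₂.subtype with hg₂
  set ι₂ : ↥M' →ₗ[A] ↥E₂ := LinearMap.codRestrict E₂
    ((LinearMap.inr A ↥Z ↥E).comp f₂)
    (fun m' => by simpa [memE₂, hf₂] using hπf₂ m') with hι₂
  have hι₂inj : Injective ι₂ := by
    intro a b hab
    have : f (0, a) = f (0, b) := by
      have := congrArg (fun p : ↥E₂ => (p : ↥Z × ↥E).2) hab
      simpa [hι₂, hf₂] using this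
    exact (Prod.ext_iff.1 (hfinj this)).2
  have hg₂surj : Surjective g₂ := by
    intro z
    obtain ⟨e, he⟩ := Submodule.mkQ_surjective K (s₁ z)
    exact ⟨⟨(z, e), by simpa [memE₂, hπ] using he⟩, rfl⟩
  have hr₂ : LinearMap.range ι₂ = LinearMap.ker g₂ := by
    apply le_antisymm
    · rintro x ⟨m', rfl⟩; simp [hg₂, hι₂]
    · rintro ⟨⟨z, e⟩, hmem⟩ hx
      have hz : z = 0 := by simpa [hg₂] using hx
      subst hz
      have : π e = 0 := by simpa [memE₂] using hmem
      have : e ∈ K := by simpa [hπ, Submodule.Quotient.mk_eq_zero] using this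
      obtain ⟨m', hm'⟩ := this
      refine ⟨m', Subtype.ext ?_⟩
      have h0 : ((ι₂ m' : ↥E₂) : ↥Z × ↥E) = ((0 : ↥Z), f₂ m') := rfl
      rw [h0, hm']
  obtain ⟨s₂', hs₂⟩ := h' (ModuleCat.of A ↥E₂) ι₂ g₂ hι₂inj hg₂surj hr₂
  set s₂ : ↥Z →ₗ[A] ↥E₂ := s₂' with hs₂d
  refine ⟨(LinearMap.snd A ↥Z ↥E).comp (E₂.subtype.comp s₂), ?_⟩
  ext z
  have h1 : π ((s₂ z : ↥Z × ↥E).2) = s₁ ((s₂ z : ↥Z × ↥E).1) :=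
    (memE₂ _).1 (s₂ z).2
  have h2 : (s₂ z : ↥Z × ↥E).1 = z := by
    have := congrFun (congrArg (fun l => l.toFun) hs₂) z
    simpa [hg₂] using this
  have h3 : gbar (π ((s₂ z : ↥Z × ↥E).2)) = z := by
    rw [h1, h2]
    have := congrFun (congrArg (fun l => l.toFun) hs₁) z
    simpa using this
  simpa [hgbar, hπ] using h3

/-- The linear version of `Equiv.piFinSucc`. -/
def finConsLinearEquiv (T : ModuleCat.{0} A) (n : ℕ) :
    (↥T × (Fin n → ↥T)) ≃ₗ[A] (Fin (n + 1) → ↥T) :=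
  { (Fin.consEquiv (fun _ : Fin (n + 1) => ↥T)) with
    map_add' := by
      intro x y; funext i
      refine Fin.cases ?_ (fun j => ?_) i <;> simp [Fin.consEquiv]
    map_smul' := by
      intro c x; funext i
      refine Fin.cases ?_ (fun j => ?_) i <;> simp [Fin.consEquiv] }

lemma ext1Zero_pi {Z T : ModuleCat.{0} A} (h : Ext1Zero A Z T) (n : ℕ) :
    Ext1Zero A Z (ModuleCat.of A (Fin n → ↥T)) := by
  induction n with
  | zero =>
    intro E f g hfinj hgsurj hr
    have hker : LinearMap.ker g = ⊥ := by
      rw [← hr]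
      apply le_antisymm _ bot_le
      rintro x ⟨y, rfl⟩
      have : y = 0 := Subsingleton.elim _ _
      simp [this]
    have hginj : Injective g := LinearMap.ker_eq_bot.mp hker
    refine ⟨(LinearEquiv.ofBijective g ⟨hginj, hgsurj⟩).symm.toLinearMap, ?_⟩
    ext z
    exact (LinearEquiv.ofBijective g ⟨hginj, hgsurj⟩).apply_symm_apply z
  | succ n ih =>
    exact ext1Zero_of_equiv (M := ModuleCat.of A (↥T × (Fin n → ↥T)))
      (finConsLinearEquiv T n) (ext1Zero_prod h ih)

lemma ext1Zero_of_inAdd {Z T T' : ModuleCat.{0} A} (h : Ext1Zero A Z T)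
    (hT' : InAdd A T T') : Ext1Zero A Z T' := by
  obtain ⟨n, W, ⟨e⟩⟩ := hT'
  intro E f g hfinj hgsurj hr
  -- embed T' × W ≅ (Fin n → T) into E × W
  set f' : ↥(ModuleCat.of A (Fin n → ↥T)) →ₗ[A] (↥E × ↥W) :=
    (f.prodMap LinearMap.id).comp (e.symm : (Fin n → ↥T) →ₗ[A] ↥T' × ↥W) with hf'
  set g' : (↥E × ↥W) →ₗ[A] ↥Z := g.comp (LinearMap.fst A ↥E ↥W) with hg'
  have hf'inj : Injective f' := by
    have hco : ⇑f' = ⇑(f.prodMap (LinearMap.id (M := ↥W))) ∘ ⇑e.symm := rfl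
    rw [hco]
    apply Injective.comp _ e.symm.injective
    intro a b hab
    obtain ⟨h1, h2⟩ := Prod.ext_iff.1 hab
    exact Prod.ext (hfinj h1) h2
  have hg'surj : Surjective g' := by
    intro z; obtain ⟨y, hy⟩ := hgsurj z
    exact ⟨(y, (0 : ↥W)), hy⟩
  have hr' : LinearMap.range f' = LinearMap.ker g' := by
    rw [hf', LinearMap.range_comp, LinearEquiv.range, Submodule.map_top]
    apply le_antisymm
    · rintro x ⟨⟨t, w⟩, rfl⟩
      have : f t ∈ LinearMap.ker g := hr ▸ LinearMap.mem_range_self f t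
      simpa [hg'] using this
    · rintro ⟨y, w⟩ hmem
      have : g y = 0 := by simpa [hg'] using hmem
      obtain ⟨t, ht⟩ : y ∈ LinearMap.range f := hr ▸ this
      exact ⟨(t, w), by simp [ht]⟩
  obtain ⟨s, hs⟩ := ext1Zero_pi h n (ModuleCat.of A (↥E × ↥W)) f' g' hf'inj hg'surj hr'
  refine ⟨(LinearMap.fst A ↥E ↥W).comp s, ?_⟩
  ext z
  have := congrFun (congrArg (fun l => l.toFun) hs) z
  simpa [hg'] using this

/-- If `Ext¹(Z, T') = 0` then any map `X → T'` extends along the injection `X → Y`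
of a short exact sequence `0 → X → Y → Z → 0` (pushout construction). -/
lemma extend_along {X Y Z T' : ModuleCat.{0} A}
    (f : ↥X →ₗ[A] ↥Y) (g : ↥Y →ₗ[A] ↥Z)
    (hf : Injective f) (hg : Surjective g)
    (hfg : LinearMap.range f = LinearMap.ker g)
    (hext : Ext1Zero A Z T') (e : ↥X →ₗ[A] ↥T') :
    ∃ e' : ↥Y →ₗ[A] ↥T', e'.comp f = e := by
  have hgf : ∀ x, g (f x) = 0 := fun x => by
    have : f x ∈ LinearMap.ker g := hfg ▸ LinearMap.mem_range_self f x
    simpa using this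
  set u : ↥X →ₗ[A] ↥T' × ↥Y := e.prod (-f) with hu
  set K : Submodule A (↥T' × ↥Y) := LinearMap.range u with hK
  set π : (↥T' × ↥Y) →ₗ[A] (↥T' × ↥Y) ⧸ K := K.mkQ with hπ
  set ι : ↥T' →ₗ[A] (↥T' × ↥Y) ⧸ K := π.comp (LinearMap.inl A ↥T' ↥Y) with hι
  set j : ↥Y →ₗ[A] (↥T' × ↥Y) ⧸ K := π.comp (LinearMap.inr A ↥T' ↥Y) with hj
  have hgK : K ≤ LinearMap.ker (g.comp (LinearMap.snd A ↥T' ↥Y)) := by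
    rintro p ⟨x, rfl⟩
    show g ((u x).2) = 0
    simp [hu, hgf x]
  set gbar : (↥T' × ↥Y) ⧸ K →ₗ[A] ↥Z :=
    K.liftQ (g.comp (LinearMap.snd A ↥T' ↥Y)) hgK with hgbar
  have hgbarι : ∀ t, gbar (ι t) = 0 := by
    intro t
    show gbar (π (t, 0)) = 0
    simp [hgbar, hπ]
  have hιinj : Injective ι := by
    intro a b hab
    have hmem : ((a, 0) : ↥T' × ↥Y) - (b, 0) ∈ K := by
      rw [← Submodule.Quotient.eq]; exact hab
    obtain ⟨x, hx⟩ := hmem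
    have h2 : -f x = 0 := congrArg Prod.snd hx |>.trans (by simp)
    have hx0 : x = 0 := hf (by simpa [neg_eq_zero] using h2)
    have h1 : e x = a - b := by
      have := congrArg Prod.fst hx; simpa [hu] using this
    rw [hx0, map_zero] at h1
    exact sub_eq_zero.mp h1.symm
  have hgbarsurj : Surjective gbar := by
    intro z; obtain ⟨y, hy⟩ := hg z
    exact ⟨π (0, y), by simpa [hgbar, hπ] using hy⟩
  have hrange : LinearMap.range ι = LinearMap.ker gbar := by
    apply le_antisymm
    · rintro q ⟨t, rfl⟩
      exact LinearMap.mem_ker.mpr (hgbarι t)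
    · intro q hq
      obtain ⟨⟨t, y⟩, rfl⟩ := Submodule.mkQ_surjective K q
      have hy : g y = 0 := by simpa [hgbar] using hq
      obtain ⟨x, hx⟩ : y ∈ LinearMap.range f := hfg ▸ hy
      refine ⟨t + e x, ?_⟩
      show π (t + e x, 0) = π (t, y)
      rw [hπ, Submodule.mkQ_apply, Submodule.mkQ_apply, Submodule.Quotient.eq]
      exact ⟨x, by simp [hu, Prod.ext_iff, hx]⟩
  obtain ⟨s0, hs0⟩ := hext (ModuleCat.of A ((↥T' × ↥Y) ⧸ K)) ι gbar hιinj hgbarsurj hrange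
  set s : ↥Z →ₗ[A] (↥T' × ↥Y) ⧸ K := s0 with hsdef
  have hs' : ∀ z, gbar (s z) = z := fun z => congrFun (congrArg (fun l => l.toFun) hs0) z
  set p : (↥T' × ↥Y) ⧸ K →ₗ[A] (↥T' × ↥Y) ⧸ K :=
    LinearMap.id - s.comp gbar with hp
  have hpmem : ∀ q, p q ∈ LinearMap.range ι := by
    intro q
    rw [hrange, LinearMap.mem_ker]
    rw [hp]
    simp only [LinearMap.sub_apply, LinearMap.id_apply, map_sub]
    show gbar q - gbar (s (gbar q)) = 0
    rw [hs' (gbar q), sub_self]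
  set eι := LinearEquiv.ofInjective ι hιinj with heι
  set r : (↥T' × ↥Y) ⧸ K →ₗ[A] ↥T' :=
    eι.symm.toLinearMap.comp (LinearMap.codRestrict (LinearMap.range ι) p hpmem) with hr
  have hrι : ∀ t, r (ι t) = t := by
    intro t
    have hpι : p (ι t) = ι t := by
      rw [hp]
      simp only [LinearMap.sub_apply, LinearMap.id_apply]
      show ι t - s (gbar (ι t)) = ι t
      rw [hgbarι t, map_zero, sub_zero]
    rw [hr]
    show eι.symm ⟨p (ι t), hpmem _⟩ = t
    rw [LinearEquiv.symm_apply_eq]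
    apply Subtype.ext
    show p (ι t) = ((eι t : LinearMap.range ι) : (↥T' × ↥Y) ⧸ K)
    rw [hpι, heι, LinearEquiv.ofInjective_apply]
  refine ⟨r.comp j, ?_⟩
  ext x
  show r (j (f x)) = e x
  have hjf : j (f x) = ι (e x) := by
    show π (0, f x) = π (e x, 0)
    rw [hπ, Submodule.mkQ_apply, Submodule.mkQ_apply, Submodule.Quotient.eq]
    exact ⟨-x, by simp [hu, Prod.ext_iff]⟩
  rw [hjf, hrι]



lemma descend_along {Y Z N : ModuleCat.{0} A} (g : ↥Y →ₗ[A] ↥Z)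
    (hg : Surjective g) (δ : ↥Y →ₗ[A] ↥N) (hδ : LinearMap.ker g ≤ LinearMap.ker δ) :
    ∃ γ : ↥Z →ₗ[A] ↥N, γ.comp g = δ := by
  set γ' : (↥Y ⧸ LinearMap.ker g) →ₗ[A] ↥N := (LinearMap.ker g).liftQ δ hδ with hγ'
  set eZ := g.quotKerEquivOfSurjective hg with heZ
  refine ⟨γ'.comp eZ.symm.toLinearMap, ?_⟩
  ext y
  show γ' (eZ.symm (g y)) = δ y
  have h1 : eZ (Submodule.Quotient.mk y) = g y := by
    rw [heZ]
    rfl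
  rw [← h1, LinearEquiv.symm_apply_apply]
  simp [hγ']


end Cotilt



namespace Cotilt

/-- Lemma 6.4 of Kimura, "Tilting theory of preprojective algebras
and c-sortable elements".

Let `A` be a finite dimensional algebra over an algebraically closed field `k` and `T`
a cotilting `A`-module.  For every short exact sequence `0 → X → Y → Z → 0` of
(finitely generated) `A`-modules with `X, Y, Z ∈ ⊥T` and every `A`-module `N`, the
induced sequence
`Hom̄_A^T(Z, N) → Hom̄_A^T(Y, N) → Hom̄_A^T(X, N)`
(composition with `g`, resp. `f`) is exact, where `Hom̄_A^T(−,−)` is `Hom_A(−,−)`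
modulo the morphisms factoring through `add T`.  Exactness at the middle term is
expressed elementwise: a morphism `β : Y → N` satisfies `β ∘ f ∈ [T]` if and only if
`β` agrees, modulo `[T]`, with a morphism factoring through `g`. -/
theorem stable_hom_exact
    (k : Type) [Field k] [IsAlgClosed k]
    (A : Type) [Ring A] [Algebra k A] [FiniteDimensional k A]
    (T : ModuleCat.{0} A) (hT : IsCotilting A k T)
    (X Y Z : ModuleCat.{0} A)
    (hXfg : Module.Finite A ↥X) (hYfg : Module.Finite A ↥Y) (hZfg : Module.Finite A ↥Z)
    (hX : MemPerp A T X) (hY : MemPerp A T Y) (hZ : MemPerp A T Z)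
    (f : ↥X →ₗ[A] ↥Y) (g : ↥Y →ₗ[A] ↥Z)
    (hf : Function.Injective f) (hg : Function.Surjective g)
    (hfg : LinearMap.range f = LinearMap.ker g)
    (N : ModuleCat.{0} A) (hNfg : Module.Finite A ↥N) :
    ∀ β : ↥Y →ₗ[A] ↥N,
      (FactorsThruAdd A T (β.comp f) ↔
        ∃ γ : ↥Z →ₗ[A] ↥N, FactorsThruAdd A T (β - γ.comp g)) := by
  intro β
  constructor
  · rintro ⟨T', hT', e, h, hfac⟩
    have hZT : Ext1Zero A Z T := hZ 0 Z ⟨LinearEquiv.refl A ↥Z⟩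
    have hext : Ext1Zero A Z T' := ext1Zero_of_inAdd hZT hT'
    obtain ⟨e', he'⟩ := extend_along f g hf hg hfg hext e
    set δ : ↥Y →ₗ[A] ↥N := β - h.comp e' with hδd
    have hδker : LinearMap.ker g ≤ LinearMap.ker δ := by
      rw [← hfg]
      rintro y ⟨x, rfl⟩
      rw [LinearMap.mem_ker]
      show β (f x) - h (e' (f x)) = 0
      have h1 : β (f x) = h (e x) := congrFun (congrArg (fun l => l.toFun) hfac) x
      have h2 : e' (f x) = e x := congrFun (congrArg (fun l => l.toFun) he') x
      rw [h1, h2, sub_self]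
    obtain ⟨γ, hγ⟩ := descend_along g hg δ hδker
    exact ⟨γ, T', hT', e', h, by rw [hγ, hδd, sub_sub_cancel]⟩
  · rintro ⟨γ, T', hT', q, h, hfac⟩
    refine ⟨T', hT', q.comp f, h, ?_⟩
    ext x
    show β (f x) = h (q (f x))
    have h0 : g (f x) = 0 := by
      have : f x ∈ LinearMap.ker g := hfg ▸ LinearMap.mem_range_self f x
      simpa using this
    have h1 : β (f x) - γ (g (f x)) = h (q (f x)) :=
      congrFun (congrArg (fun l => l.toFun) hfac) (f x)
    rw [h0, map_zero, sub_zero] at h1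
    exact h1

end Cotilt
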